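/- For x > 0, the Gamma function satisfies Stirling's bound Γ(x) ≤ √(2π) · x^{x − 1/2} · e^{−x} · e^{1/(12x)}. -/

import Mathlib

open Real Filter Topology Set

noncomputable section

namespace StirlingGammaAux

/-- Binet summand `g y = (y+1/2)(log(y+1) - log y) - 1`. -/
def g (y : ℝ) : ℝ := (y + 1/2) * (Real.log (y+1) - Real.log y) - 1
/-- derivative of `g` -/
def g1 (y : ℝ) : ℝ := (Real.log (y+1) - Real.log y) - (1/(2*y) + 1/(2*(y+1)))
/-- `1/12(1/y - 1/(y+1)) - g y` -/
def h (y : ℝ) : ℝ := (1/12) * (1/y - 1/(y+1)) - g y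
/-- derivative of `h` -/
def h1 (y : ℝ) : ℝ := (1/12) * (1/(y+1)^2 - 1/y^2) - g1 y

lemma hasDerivAt_logs {y : ℝ} (hy : 0 < y) :
    HasDerivAt (fun z : ℝ => Real.log (z+1) - Real.log z) (1/(y+1) - 1/y) y := by
  have h1 : HasDerivAt (fun z : ℝ => Real.log (z+1)) (1/(y+1)) y := by
    have := (Real.hasDerivAt_log (by positivity : (y+1:ℝ) ≠ 0)).comp y
      ((hasDerivAt_id y).add_const 1)
    simpa [one_div, Function.comp_def] using this
  simpa [one_div, Pi.sub_def] using h1.sub (Real.hasDerivAt_log hy.ne')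

lemma hasDerivAt_g {y : ℝ} (hy : 0 < y) : HasDerivAt g (g1 y) y := by
  have hlog := hasDerivAt_logs hy
  have hid : HasDerivAt (fun z : ℝ => z + 1/2) 1 y := (hasDerivAt_id y).add_const _
  have := hid.mul hlog
  refine (this.sub_const 1).congr_deriv ?_
  have hy1 : (y:ℝ) + 1 ≠ 0 := by positivity
  unfold g1
  field_simp
  ring

lemma hasDerivAt_g1 {y : ℝ} (hy : 0 < y) :
    HasDerivAt g1 (1/(2*y^2*(y+1)^2)) y := by
  have hlog := hasDerivAt_logs hy
  have hy1 : (y:ℝ) + 1 ≠ 0 := by positivity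
  have h2 : HasDerivAt (fun z : ℝ => 1/(2*z)) (-(2)/(2*y)^2) y := by
    simpa [Pi.div_def] using (hasDerivAt_const y (1:ℝ)).div ((hasDerivAt_id y).const_mul 2)
      (by positivity : (2*y:ℝ) ≠ 0)
  have h3 : HasDerivAt (fun z : ℝ => 1/(2*(z+1))) (-(2)/(2*(y+1))^2) y := by
    simpa [Pi.div_def] using (hasDerivAt_const y (1:ℝ)).div
      (((hasDerivAt_id y).add_const 1).const_mul 2) (by positivity : (2*(y+1):ℝ) ≠ 0)
  refine (hlog.sub (h2.add h3)).congr_deriv ?_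
  field_simp
  ring

lemma hasDerivAt_h {y : ℝ} (hy : 0 < y) : HasDerivAt h (h1 y) y := by
  have hy1 : (y:ℝ) + 1 ≠ 0 := by positivity
  have h2 : HasDerivAt (fun z : ℝ => 1/z) (-1/y^2) y := by
    simpa [Pi.div_def] using (hasDerivAt_const y (1:ℝ)).div (hasDerivAt_id y) hy.ne'
  have h3 : HasDerivAt (fun z : ℝ => 1/(z+1)) (-1/(y+1)^2) y := by
    simpa [Pi.div_def] using (hasDerivAt_const y (1:ℝ)).div ((hasDerivAt_id y).add_const 1) hy1
  have := ((h2.sub h3).const_mul (1/12 : ℝ)).sub (hasDerivAt_g hy)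
  refine this.congr_deriv ?_
  unfold h1
  ring

lemma hasDerivAt_h1 {y : ℝ} (hy : 0 < y) :
    HasDerivAt h1 (1/(6*y^3*(y+1)^3)) y := by
  have hy1 : (y:ℝ) + 1 ≠ 0 := by positivity
  have h2 : HasDerivAt (fun z : ℝ => 1/z^2) (-(2*y)/(y^2)^2) y := by
    simpa [Pi.div_def, Pi.pow_def] using (hasDerivAt_const y (1:ℝ)).div ((hasDerivAt_id y).pow 2)
      (by positivity : (y:ℝ)^2 ≠ 0)
  have h3 : HasDerivAt (fun z : ℝ => 1/(z+1)^2) (-(2*(y+1))/((y+1)^2)^2) y := by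
    simpa [Pi.div_def, Pi.pow_def] using (hasDerivAt_const y (1:ℝ)).div (((hasDerivAt_id y).add_const 1).pow 2)
      (by positivity : ((y:ℝ)+1)^2 ≠ 0)
  have := ((h3.sub h2).const_mul (1/12 : ℝ)).sub (hasDerivAt_g1 hy)
  refine this.congr_deriv ?_
  field_simp
  ring

lemma logs_eq : ∀ᶠ y : ℝ in atTop, Real.log (y+1) - Real.log y = Real.log (1 + 1/y) := by
  filter_upwards [eventually_gt_atTop (0:ℝ)] with y hy
  rw [← Real.log_div (by positivity) hy.ne']
  congr 1
  field_simp

lemma tendsto_logs : Tendsto (fun y : ℝ => Real.log (y+1) - Real.log y) atTop (𝓝 0) := by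
  have h1 : Tendsto (fun y : ℝ => 1 + 1/y) atTop (𝓝 1) := by
    simpa using tendsto_const_nhds.add
      (tendsto_inv_atTop_zero : Tendsto (fun y:ℝ => y⁻¹) atTop (𝓝 0))
  have h2 : Tendsto (fun y : ℝ => Real.log (1 + 1/y)) atTop (𝓝 0) := by
    have := (Real.continuousAt_log (by norm_num : (1:ℝ) ≠ 0)).tendsto.comp h1
    simpa [Function.comp_def] using this
  exact h2.congr' (logs_eq.mono fun y hy => hy.symm)

lemma tendsto_inv_shift (c : ℝ) : Tendsto (fun y : ℝ => 1/(y+c)) atTop (𝓝 0) := by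
  simp only [one_div]
  exact tendsto_inv_atTop_zero.comp (tendsto_atTop_add_const_right atTop c tendsto_id)

lemma tendsto_inv_mul_shift (c d : ℝ) (hc : 0 < c) :
    Tendsto (fun y : ℝ => 1/(c*(y+d))) atTop (𝓝 0) := by
  simp only [one_div]
  refine tendsto_inv_atTop_zero.comp ?_
  exact (tendsto_atTop_add_const_right atTop d tendsto_id).const_mul_atTop hc

lemma tendsto_g : Tendsto g atTop (𝓝 0) := by
  have key : Tendsto (fun y : ℝ => y * Real.log (1 + 1/y)) atTop (𝓝 1) := by
    simpa using Real.tendsto_mul_log_one_add_div_atTop 1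
  have key2 : Tendsto (fun y : ℝ => y * (Real.log (y+1) - Real.log y)) atTop (𝓝 1) :=
    key.congr' (by filter_upwards [logs_eq] with y hy using by rw [hy])
  have h3 : Tendsto (fun y : ℝ => y * (Real.log (y+1) - Real.log y)
      + (1/2) * (Real.log (y+1) - Real.log y) - 1) atTop (𝓝 0) := by
    have := (key2.add (tendsto_logs.const_mul (1/2))).sub_const 1
    norm_num at this
    convert this using 2 <;> norm_num
  refine h3.congr (fun y => by unfold g; ring)

lemma tendsto_g1 : Tendsto g1 atTop (𝓝 0) := by
  have := tendsto_logs.sub ((tendsto_inv_mul_shift 2 0 (by norm_num)).add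
    (tendsto_inv_mul_shift 2 1 (by norm_num)))
  norm_num at this
  refine Tendsto.congr (fun y => ?_) this
  unfold g1
  norm_num

lemma tendsto_h : Tendsto h atTop (𝓝 0) := by
  have := (((tendsto_inv_shift 0).sub (tendsto_inv_shift 1)).const_mul (1/12)).sub tendsto_g
  norm_num at this ⊢
  refine Tendsto.congr (fun y => ?_) this
  unfold h
  norm_num

lemma tendsto_sq_inv (c : ℝ) : Tendsto (fun y : ℝ => 1/(y+c)^2) atTop (𝓝 0) := by
  have := (tendsto_inv_shift c).mul (tendsto_inv_shift c)
  norm_num at this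
  refine Tendsto.congr (fun y => ?_) this
  rw [← mul_inv, ← sq, one_div]

lemma tendsto_h1 : Tendsto h1 atTop (𝓝 0) := by
  have := (((tendsto_sq_inv 1).sub (tendsto_sq_inv 0)).const_mul (1/12)).sub tendsto_g1
  norm_num at this ⊢
  refine Tendsto.congr (fun y => ?_) this
  unfold h1
  norm_num

lemma nonpos_of_deriv_nonneg_tendsto {f f' : ℝ → ℝ}
    (hd : ∀ y ∈ Ioi (0:ℝ), HasDerivAt f (f' y) y)
    (h0 : ∀ y ∈ Ioi (0:ℝ), 0 ≤ f' y)
    (hlim : Tendsto f atTop (𝓝 0)) : ∀ x ∈ Ioi (0:ℝ), f x ≤ 0 := by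
  intro x hx
  have hmono : MonotoneOn f (Ici x) := by
    apply monotoneOn_of_deriv_nonneg (convex_Ici x)
    · exact fun y hy => (hd y (Set.mem_Ioi.mpr (lt_of_lt_of_le hx hy))).continuousAt.continuousWithinAt
    · intro y hy
      rw [interior_Ici] at hy
      exact ((hd y (Set.mem_Ioi.mpr (hx.trans hy))).differentiableAt).differentiableWithinAt
    · intro y hy
      rw [interior_Ici] at hy
      rw [(hd y (Set.mem_Ioi.mpr (hx.trans hy))).deriv]
      exact h0 y (Set.mem_Ioi.mpr (hx.trans hy))
  refine ge_of_tendsto hlim ?_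
  filter_upwards [eventually_ge_atTop x] with y hy
  exact hmono self_mem_Ici hy hy

lemma nonneg_of_deriv_nonpos_tendsto {f f' : ℝ → ℝ}
    (hd : ∀ y ∈ Ioi (0:ℝ), HasDerivAt f (f' y) y)
    (h0 : ∀ y ∈ Ioi (0:ℝ), f' y ≤ 0)
    (hlim : Tendsto f atTop (𝓝 0)) : ∀ x ∈ Ioi (0:ℝ), 0 ≤ f x := by
  have := nonpos_of_deriv_nonneg_tendsto (f := fun y => -f y) (f' := fun y => -f' y)
    (fun y hy => (hd y hy).neg) (fun y hy => neg_nonneg.mpr (h0 y hy)) (by simpa using hlim.neg)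
  intro x hx
  simpa using this x hx

lemma g1_nonpos : ∀ x ∈ Ioi (0:ℝ), g1 x ≤ 0 :=
  nonpos_of_deriv_nonneg_tendsto (fun y hy => hasDerivAt_g1 hy)
    (fun y hy => by positivity) tendsto_g1

lemma g_nonneg : ∀ x ∈ Ioi (0:ℝ), 0 ≤ g x :=
  nonneg_of_deriv_nonpos_tendsto (fun y hy => hasDerivAt_g hy) g1_nonpos tendsto_g

lemma h1_nonpos : ∀ x ∈ Ioi (0:ℝ), h1 x ≤ 0 :=
  nonpos_of_deriv_nonneg_tendsto (fun y hy => hasDerivAt_h1 hy)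
    (fun y hy => by have : (0:ℝ) < y := hy; positivity) tendsto_h1

lemma h_nonneg : ∀ x ∈ Ioi (0:ℝ), 0 ≤ h x :=
  nonneg_of_deriv_nonpos_tendsto (fun y hy => hasDerivAt_h hy) h1_nonpos tendsto_h

lemma g_le {y : ℝ} (hy : 0 < y) : g y ≤ (1/12) * (1/y - 1/(y+1)) := by
  have := h_nonneg y hy
  unfold h at this
  linarith

/-- The Binet function as a series. -/
def E (x : ℝ) : ℝ := ∑' n : ℕ, g (x + n)

lemma hasSum_tel {x : ℝ} (hx : 0 < x) :
    HasSum (fun n : ℕ => (1/12) * (1/(x+n) - 1/(x+n+1))) (1/(12*x)) := by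
  have key : ∀ n : ℕ, ∑ i ∈ Finset.range n, (1/12) * (1/(x+i) - 1/(x+i+1))
      = (1/12) * (1/x) - (1/12) * (1/(x+n)) := by
    intro n
    have h0 := Finset.sum_range_sub' (fun i : ℕ => (1/12 : ℝ) * (1/(x+i))) n
    calc ∑ i ∈ Finset.range n, (1/12:ℝ) * (1/(x+i) - 1/(x+i+1))
        = ∑ i ∈ Finset.range n,
            ((1/12:ℝ) * (1/(x+(i:ℕ))) - (1/12) * (1/(x+((i+1 : ℕ):ℝ)))) := by
          refine Finset.sum_congr rfl fun i _ => ?_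
          push_cast
          ring
      _ = (1/12:ℝ) * (1/(x+((0:ℕ):ℝ))) - (1/12) * (1/(x+n)) := h0
      _ = (1/12) * (1/x) - (1/12) * (1/(x+n)) := by norm_num
  have hnonneg : ∀ n : ℕ, (0:ℝ) ≤ (1/12) * (1/(x+n) - 1/(x+n+1)) := by
    intro n
    have h1 : (0:ℝ) < x + n := by positivity
    have h2 : (0:ℝ) < x + n + 1 := by positivity
    have : (1:ℝ)/(x+n+1) ≤ 1/(x+n) := by
      apply one_div_le_one_div_of_le h1; linarith
    nlinarith
  rw [hasSum_iff_tendsto_nat_of_nonneg hnonneg]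
  have lim2 : Tendsto (fun n : ℕ => (1/12:ℝ)*(1/x) - (1/12)*(1/(x+n))) atTop
      (𝓝 (1/(12*x))) := by
    have h0 : (1/12:ℝ)*(1/x) - (1/12)*0 = 1/(12*x) := by
      field_simp
      ring
    rw [← h0]
    refine tendsto_const_nhds.sub (Tendsto.const_mul _ ?_)
    exact ((tendsto_inv_shift x).comp tendsto_natCast_atTop_atTop).congr
      (fun n => by simp [add_comm])
  exact lim2.congr fun n => (key n).symm

lemma summable_g {x : ℝ} (hx : 0 < x) : Summable (fun n : ℕ => g (x + n)) := by
  refine Summable.of_nonneg_of_le (fun n => g_nonneg _ (Set.mem_Ioi.mpr (by positivity))) (fun n => ?_)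
    (hasSum_tel hx).summable
  have : (0:ℝ) < x + n := by positivity
  simpa [add_assoc] using g_le this

lemma E_nonneg {x : ℝ} (hx : 0 < x) : 0 ≤ E x :=
  tsum_nonneg fun n => g_nonneg _ (Set.mem_Ioi.mpr (by positivity))

lemma E_le {x : ℝ} (hx : 0 < x) : E x ≤ 1/(12*x) := by
  rw [← (hasSum_tel hx).tsum_eq]
  refine Summable.tsum_le_tsum (fun n => ?_) (summable_g hx) (hasSum_tel hx).summable
  have : (0:ℝ) < x + n := by positivity
  simpa [add_assoc] using g_le this

lemma E_rec {x : ℝ} (hx : 0 < x) : E x = g x + E (x + 1) := by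
  rw [E, Summable.tsum_eq_zero_add (summable_g hx)]
  congr 1
  · norm_num
  · rw [E]
    congr 1
    ext n
    congr 1
    push_cast
    ring

/-- `phi y = (y - 1/2) log y - y` -/
def phi (y : ℝ) : ℝ := (y - 1/2) * Real.log y - y
def phi1 (y : ℝ) : ℝ := Real.log y - 1/(2*y)

lemma hasDerivAt_phi {y : ℝ} (hy : 0 < y) : HasDerivAt phi (phi1 y) y := by
  have := (((hasDerivAt_id y).sub_const (1/2)).mul (Real.hasDerivAt_log hy.ne')).sub
    (hasDerivAt_id y)
  refine this.congr_deriv ?_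
  unfold phi1 id
  field_simp
  ring

lemma hasDerivAt_phi1 {y : ℝ} (hy : 0 < y) :
    HasDerivAt phi1 (1/y + 1/(2*y^2)) y := by
  have h2 : HasDerivAt (fun z : ℝ => 1/(2*z)) (-(2)/(2*y)^2) y := by
    simpa [Pi.div_def] using (hasDerivAt_const y (1:ℝ)).div ((hasDerivAt_id y).const_mul 2)
      (by positivity : (2*y:ℝ) ≠ 0)
  have := (Real.hasDerivAt_log hy.ne').sub h2
  refine this.congr_deriv ?_
  field_simp
  ring

lemma convexOn_phi : ConvexOn ℝ (Ioi 0) phi := by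
  refine convexOn_of_hasDerivWithinAt2_nonneg (f' := phi1)
    (f'' := fun y => 1/y + 1/(2*y^2)) (convex_Ioi 0)
    (fun y hy => (hasDerivAt_phi hy).continuousAt.continuousWithinAt) ?_ ?_ ?_
  · intro y hy
    rw [interior_Ioi] at hy
    exact (hasDerivAt_phi hy).hasDerivWithinAt
  · intro y hy
    rw [interior_Ioi] at hy
    exact (hasDerivAt_phi1 hy).hasDerivWithinAt
  · intro y hy
    rw [interior_Ioi] at hy
    have : (0:ℝ) < y := hy
    positivity

lemma convexOn_g : ConvexOn ℝ (Ioi 0) g := by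
  refine convexOn_of_hasDerivWithinAt2_nonneg (f' := g1)
    (f'' := fun y => 1/(2*y^2*(y+1)^2)) (convex_Ioi 0)
    (fun y hy => (hasDerivAt_g (Set.mem_Ioi.mp hy)).continuousAt.continuousWithinAt) ?_ ?_ ?_
  · intro y hy
    rw [interior_Ioi] at hy
    exact (hasDerivAt_g hy).hasDerivWithinAt
  · intro y hy
    rw [interior_Ioi] at hy
    exact (hasDerivAt_g1 hy).hasDerivWithinAt
  · intro y hy
    rw [interior_Ioi] at hy
    have : (0:ℝ) < y := hy
    positivity

lemma convexOn_E : ConvexOn ℝ (Ioi 0) E := by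
  refine ⟨convex_Ioi 0, fun x hx y hy a b ha hb hab => ?_⟩
  simp only [smul_eq_mul] at *
  have hx' : (0:ℝ) < x := hx
  have hy' : (0:ℝ) < y := hy
  have hxy : (0:ℝ) < a*x + b*y := by
    have := (convex_Ioi (0:ℝ)) hx hy ha hb hab
    simpa using this
  have term : ∀ n : ℕ, g ((a*x + b*y) + n) ≤ a * g (x+n) + b * g (y+n) := by
    intro n
    have hmem1 : x + (n:ℝ) ∈ Ioi (0:ℝ) := Set.mem_Ioi.mpr (by positivity)
    have hmem2 : y + (n:ℝ) ∈ Ioi (0:ℝ) := Set.mem_Ioi.mpr (by positivity)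
    have := convexOn_g.2 hmem1 hmem2 ha hb hab
    simp only [smul_eq_mul] at this
    have harg : a * (x + n) + b * (y + n) = (a*x + b*y) + n := by
      have : a * (x+n) + b * (y+n) = a*x + b*y + (a+b)*n := by ring
      rw [this, hab]; ring
    rwa [harg] at this
  have hsum1 : Summable (fun n : ℕ => g ((a*x+b*y) + n)) := summable_g hxy
  have hsum2 : Summable (fun n : ℕ => a * g (x+n) + b * g (y+n)) :=
    ((summable_g hx').mul_left a).add ((summable_g hy').mul_left b)
  calc E (a*x+b*y) = ∑' n : ℕ, g ((a*x+b*y) + n) := rfl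
    _ ≤ ∑' n : ℕ, (a * g (x+n) + b * g (y+n)) := Summable.tsum_le_tsum term hsum1 hsum2
    _ = a * E x + b * E y := by
        rw [Summable.tsum_add ((summable_g hx').mul_left a) ((summable_g hy').mul_left b),
          tsum_mul_left, tsum_mul_left]
        rfl

/-- the constant -/
def c : ℝ := phi 1 + E 1

/-- candidate function for Bohr-Mollerup -/
def F (s : ℝ) : ℝ := Real.exp (phi s + E s - c)

lemma F_eq_Gamma : EqOn F Real.Gamma (Ioi (0:ℝ)) := by
  refine Real.eq_Gamma_of_log_convex ?_ ?_ (fun {y} hy => Real.exp_pos _) ?_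
  · have hlog : (Real.log ∘ F) = fun s => (phi s + E s) + (-c) := by
      funext s
      simp [F, Real.log_exp, sub_eq_add_neg]
    rw [hlog]
    exact (convexOn_phi.add convexOn_E).add_const _
  · intro y hy
    have hrec := E_rec hy
    have hphi : phi (y+1) = phi y + g y + Real.log y := by
      unfold phi g
      have h1 : Real.log (y+1) = (Real.log (y+1) - Real.log y) + Real.log y := by ring
      rw [h1]
      ring
    have hexp : phi (y+1) + E (y+1) - c = Real.log y + (phi y + E y - c) := by
      rw [hphi]; linarith
    rw [F, F, hexp, Real.exp_add, Real.exp_log hy]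
  · rw [F, c]
    simp

lemma c_eq : c = -(Real.log (2*Real.pi)) / 2 := by
  have key : ∀ n : ℕ, c = phi ((n:ℝ)+1) + E ((n:ℝ)+1) - Real.log (n.factorial) := by
    intro n
    have hpos : ((n:ℝ)+1) ∈ Ioi (0:ℝ) := Set.mem_Ioi.mpr (by positivity)
    have := F_eq_Gamma hpos
    rw [Real.Gamma_nat_eq_factorial] at this
    have hlog : phi ((n:ℝ)+1) + E ((n:ℝ)+1) - c = Real.log (n.factorial) := by
      rw [← Real.log_exp (phi ((n:ℝ)+1) + E ((n:ℝ)+1) - c)]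
      rw [show Real.exp (phi ((n:ℝ)+1) + E ((n:ℝ)+1) - c) = F ((n:ℝ)+1) from rfl, this]
    linarith
  -- limit of the RHS
  have T1 : Tendsto (fun n : ℕ => E ((n:ℝ)+1)) atTop (𝓝 0) := by
    refine squeeze_zero (fun n => E_nonneg (by positivity)) (fun n => E_le (by positivity)) ?_
    exact ((tendsto_inv_mul_shift 12 1 (by norm_num)).comp tendsto_natCast_atTop_atTop)
  have Td : Tendsto (fun n : ℕ => Real.log (n.factorial) - ((n:ℝ) + 1/2) * Real.log n + n)
      atTop (𝓝 (Real.log (2*Real.pi) / 2)) := by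
    have hS := Stirling.tendsto_stirlingSeq_sqrt_pi
    have hlogS : Tendsto (fun n : ℕ => Real.log (Stirling.stirlingSeq n)) atTop
        (𝓝 (Real.log (Real.sqrt Real.pi))) :=
      ((Real.continuousAt_log (by positivity)).tendsto.comp hS)
    have heq : ∀ᶠ n : ℕ in atTop, Real.log (Stirling.stirlingSeq n)
        = Real.log (n.factorial) - ((n:ℝ) + 1/2) * Real.log n + n - Real.log 2 / 2 := by
      filter_upwards [eventually_ge_atTop 1] with n hn
      have hn' : (0:ℝ) < n := by exact_mod_cast hn
      rw [Stirling.log_stirlingSeq_formula, Real.log_mul (by norm_num) hn'.ne',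
        Real.log_div hn'.ne' (Real.exp_pos 1).ne', Real.log_exp]
      ring
    have := hlogS.congr' heq
    have h2 : Tendsto (fun n : ℕ => Real.log (n.factorial) - ((n:ℝ) + 1/2) * Real.log n + n)
        atTop (𝓝 (Real.log (Real.sqrt Real.pi) + Real.log 2 / 2)) := by
      have := this.add_const (Real.log 2 / 2)
      refine this.congr fun n => by ring
    convert h2 using 2
    rw [Real.log_sqrt Real.pi_pos.le, Real.log_mul (by norm_num) Real.pi_pos.ne']
    ring
  have hgn : Tendsto (fun n : ℕ => g n) atTop (𝓝 0) :=
    tendsto_g.comp tendsto_natCast_atTop_atTop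
  have T2 : Tendsto (fun n : ℕ => phi ((n:ℝ)+1) + E ((n:ℝ)+1) - Real.log (n.factorial))
      atTop (𝓝 (-(Real.log (2*Real.pi))/2)) := by
    have hid : ∀ n : ℕ, phi ((n:ℝ)+1) + E ((n:ℝ)+1) - Real.log (n.factorial)
        = g n - (Real.log (n.factorial) - ((n:ℝ) + 1/2) * Real.log n + n) + E ((n:ℝ)+1) := by
      intro n
      unfold phi g
      ring
    have h3 := (hgn.sub Td).add T1
    rw [zero_sub, add_zero] at h3
    have h4 : -(Real.log (2*Real.pi))/2 = -(Real.log (2*Real.pi)/2) := by ring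
    rw [h4]
    exact h3.congr fun n => (hid n).symm
  have := tendsto_nhds_unique (tendsto_const_nhds.congr fun n => key n) T2
  exact this

end StirlingGammaAux

end

open StirlingGammaAux in
/-- Stirling's upper bound for the Gamma function:
`Γ(x) ≤ √(2π) · x^{x−1/2} · e^{−x} · e^{1/(12x)}` for `x > 0`. -/
theorem stmt_8 (x : ℝ) (hx : 0 < x) :
    Real.Gamma x ≤ Real.sqrt (2 * Real.pi) * x ^ (x - 1 / 2) *
      Real.exp (-x) * Real.exp (1 / (12 * x)) := by
  have hEx := E_le hx
  have h1 : Real.Gamma x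
      = Real.exp ((x - 1/2) * Real.log x - x + E x + Real.log (2*Real.pi)/2) := by
    rw [← F_eq_Gamma (Set.mem_Ioi.mpr hx), F, c_eq]
    congr 1
    unfold phi
    ring
  have hrhs : Real.sqrt (2*Real.pi) * x ^ (x - 1/2) * Real.exp (-x) * Real.exp (1/(12*x))
      = Real.exp ((Real.log (2*Real.pi)/2 + (x - 1/2)*Real.log x) + (-x) + 1/(12*x)) := by
    rw [Real.exp_add, Real.exp_add, Real.exp_add]
    congr 2
    congr 1
    · rw [← Real.log_sqrt (by positivity : (0:ℝ) ≤ 2*Real.pi),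
        Real.exp_log (Real.sqrt_pos.mpr (by positivity))]
    · rw [Real.rpow_def_of_pos hx]
      ring_nf
  rw [h1, hrhs]
  apply Real.exp_le_exp.mpr
  linarith
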